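/- If U⁻, U⁺ are closed, disjoint, non-trivial conical intervals and v ∈ C(U⁻,U⁺), then for every unit-spacelike vector u with x⁻(u) ∈ U⁻ and x⁺(u) ∈ U⁺, one has ⟨v, u⟩ > 0; in particular the set C(U⁻,U⁺) is a non-empty open convex cone. -/

import Mathlib

noncomputable section

/-- The Lorentzian bilinear form of signature (2,1) on ℝ³. -/
def ldot (x y : Fin 3 → ℝ) : ℝ := x 0 * y 0 + x 1 * y 1 - x 2 * y 2

/-- The Lorentz cross-product, the unique bilinear map with ⟨u, v ⊠ w⟩ = det[u v w]. -/
def lcross (v w : Fin 3 → ℝ) : Fin 3 → ℝ :=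
  ![v 1 * w 2 - v 2 * w 1, v 2 * w 0 - v 0 * w 2, -(v 0 * w 1 - v 1 * w 0)]

/-- Determinant of the 3×3 matrix with columns x, y, z. -/
def det3 (x y z : Fin 3 → ℝ) : ℝ := (Matrix.transpose (Matrix.of ![x, y, z])).det

/-- A future-pointing lightlike vector of Euclidean length one (representing a
future-pointing lightlike ray). -/
def FutureUnitNull (x : Fin 3 → ℝ) : Prop :=
  ldot x x = 0 ∧ x 2 > 0 ∧ x 0 ^ 2 + x 1 ^ 2 + x 2 ^ 2 = 1

/-- The closed conical interval with boundary rays spanned by a and b, ordered so that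
⟨x, a ⊠ b⟩ ≥ 0 on the interval (a = x⁻(U), b = x⁺(U)). -/
def arc (a b : Fin 3 → ℝ) : Set (Fin 3 → ℝ) :=
  {x | FutureUnitNull x ∧ 0 ≤ ldot x (lcross a b)}

/-- (u, xm, xp) is a null frame: u is unit-spacelike, xm = x⁻(u) and xp = x⁺(u) are the
future-pointing Euclidean-unit lightlike vectors spanning u^⊥ ∩ lightcone, ordered so
that (u, xm, xp) is positively oriented. -/
def IsNullFramePair (u xm xp : Fin 3 → ℝ) : Prop :=
  ldot u u = 1 ∧ FutureUnitNull xm ∧ FutureUnitNull xp ∧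
  ldot xm u = 0 ∧ ldot xp u = 0 ∧ det3 u xm xp > 0

/-- The cone C(U⁻, U⁺): vectors pairing positively with every unit-spacelike u whose
null frame satisfies x⁻(u) ∈ U⁻ and x⁺(u) ∈ U⁺. -/
def coneC (Um Up : Set (Fin 3 → ℝ)) : Set (Fin 3 → ℝ) :=
  {v | ∀ u xm xp : Fin 3 → ℝ, IsNullFramePair u xm xp → xm ∈ Um → xp ∈ Up → 0 < ldot v u}

/-! ### Auxiliary algebraic lemmas -/

open Real

lemma det3_eq (x y z : Fin 3 → ℝ) : det3 x y z =
    x 0 * y 1 * z 2 - x 0 * y 2 * z 1 - x 1 * y 0 * z 2 + x 1 * y 2 * z 0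
      + x 2 * y 0 * z 1 - x 2 * y 1 * z 0 := by
  simp [det3, Matrix.det_fin_three, Matrix.transpose_apply, Matrix.vecHead, Matrix.vecTail,
    Matrix.cons_val_zero, Matrix.cons_val_one, Matrix.head_cons]

lemma ldot_lcross (v a b : Fin 3 → ℝ) : ldot v (lcross a b) = det3 v a b := by
  simp [ldot, lcross, det3_eq]; ring

lemma lcross_sq (a b : Fin 3 → ℝ) :
    ldot (lcross a b) (lcross a b) = ldot a b ^ 2 - ldot a a * ldot b b := by
  simp [ldot, lcross]; ring

lemma ldot_smul_right (t : ℝ) (x y : Fin 3 → ℝ) : ldot x (t • y) = t * ldot x y := by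
  simp [ldot]; ring

lemma ldot_smul_left (t : ℝ) (x y : Fin 3 → ℝ) : ldot (t • x) y = t * ldot x y := by
  simp [ldot]; ring

lemma ldot_smul_both (t : ℝ) (y : Fin 3 → ℝ) : ldot (t • y) (t • y) = t^2 * ldot y y := by
  simp [ldot]; ring

lemma det3_add_left (x z a b : Fin 3 → ℝ) : det3 (x + z) a b = det3 x a b + det3 z a b := by
  simp [det3_eq]; ring

lemma sqrt2_sq : Real.sqrt 2 ^ 2 = 2 := Real.sq_sqrt (by norm_num)
lemma sqrt2_pos : 0 < Real.sqrt 2 := Real.sqrt_pos.mpr (by norm_num)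

/-! ### The circle of future unit null vectors -/

def nX (θ : ℝ) : Fin 3 → ℝ :=
  ![Real.cos θ * (Real.sqrt 2 / 2), Real.sin θ * (Real.sqrt 2 / 2), Real.sqrt 2 / 2]

lemma nX_apply0 (θ : ℝ) : nX θ 0 = Real.cos θ * (Real.sqrt 2 / 2) := rfl
lemma nX_apply1 (θ : ℝ) : nX θ 1 = Real.sin θ * (Real.sqrt 2 / 2) := rfl
lemma nX_apply2 (θ : ℝ) : nX θ 2 = Real.sqrt 2 / 2 := rfl

lemma nX_FUN (θ : ℝ) : FutureUnitNull (nX θ) := by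
  have h2 := sqrt2_sq
  have hsc := Real.sin_sq_add_cos_sq θ
  have hs2 : (0:ℝ) < Real.sqrt 2 := sqrt2_pos
  refine ⟨?_, ?_, ?_⟩
  · simp only [ldot, nX_apply0, nX_apply1, nX_apply2]; nlinarith
  · simp only [nX_apply2, gt_iff_lt]; positivity
  · simp only [nX_apply0, nX_apply1, nX_apply2]; nlinarith

lemma nX_add_int (θ : ℝ) (k : ℤ) : nX (θ + k * (2 * Real.pi)) = nX θ := by
  unfold nX
  rw [Real.cos_add_int_mul_two_pi, Real.sin_add_int_mul_two_pi]

lemma nX_sub_int (θ : ℝ) (k : ℤ) : nX (θ - k * (2 * Real.pi)) = nX θ := by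
  have h := nX_add_int (θ - k * (2 * Real.pi)) k
  rw [show θ - k * (2 * Real.pi) + k * (2 * Real.pi) = θ by ring] at h
  exact h.symm

lemma FUN_x2 {x : Fin 3 → ℝ} (h : FutureUnitNull x) : x 2 = Real.sqrt 2 / 2 := by
  obtain ⟨h0, h1, h3⟩ := h
  have hsq : x 2 ^ 2 = 1 / 2 := by simp only [ldot] at h0; nlinarith
  have h2 := sqrt2_sq
  have hfac : (x 2 - Real.sqrt 2 / 2) * (x 2 + Real.sqrt 2 / 2) = 0 := by
    linear_combination hsq - (1/4) * h2
  rcases mul_eq_zero.mp hfac with h | h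
  · linarith
  · have := sqrt2_pos; linarith

lemma exists_angle {x : Fin 3 → ℝ} (h : FutureUnitNull x) : ∃ θ, x = nX θ := by
  have hx2 := FUN_x2 h
  obtain ⟨h0, h1, h3⟩ := h
  have h2 := sqrt2_sq
  have hsum : (Real.sqrt 2 * x 0) ^ 2 + (Real.sqrt 2 * x 1) ^ 2 = 1 := by
    simp only [ldot] at h0; nlinarith
  set z : ℂ := ⟨Real.sqrt 2 * x 0, Real.sqrt 2 * x 1⟩ with hz
  have habs : ‖z‖ = 1 := by
    have hn : Complex.normSq z = 1 := by
      rw [Complex.normSq_mk]; nlinarith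
    have := Complex.sq_norm z
    nlinarith [norm_nonneg z]
  have hzne : z ≠ 0 := by
    intro hc; rw [hc] at habs; simp at habs
  have hcos : Real.cos (Complex.arg z) = Real.sqrt 2 * x 0 := by
    rw [Complex.cos_arg hzne, habs]; simp [hz]
  have hsin : Real.sin (Complex.arg z) = Real.sqrt 2 * x 1 := by
    rw [Complex.sin_arg, habs]; simp [hz]
  refine ⟨Complex.arg z, ?_⟩
  funext i
  fin_cases i
  · show x 0 = nX _ 0
    rw [nX_apply0, hcos]; nlinarith
  · show x 1 = nX _ 1
    rw [nX_apply1, hsin]; nlinarith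
  · show x 2 = nX _ 2
    rw [nX_apply2, hx2]

lemma sin_triple (p q : ℝ) :
    Real.sin (2*p) + Real.sin (2*q) - Real.sin (2*p + 2*q)
      = 4 * Real.sin p * Real.sin q * Real.sin (p + q) := by
  rw [Real.sin_two_mul, Real.sin_two_mul, show 2*p + 2*q = 2*(p+q) by ring,
    Real.sin_two_mul, Real.sin_add, Real.cos_add]
  linear_combination (-2 * Real.sin p * Real.cos p) * Real.sin_sq_add_cos_sq q
    + (-2 * Real.sin q * Real.cos q) * Real.sin_sq_add_cos_sq p

lemma det3X (t1 t2 t3 : ℝ) :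
    det3 (nX t1) (nX t2) (nX t3)
      = Real.sqrt 2 * (Real.sin ((t2-t1)/2) * Real.sin ((t3-t2)/2) * Real.sin ((t3-t1)/2)) := by
  have h2 := sqrt2_sq
  have step1 : det3 (nX t1) (nX t2) (nX t3)
      = (Real.sqrt 2 / 2)^3 * (Real.sin (t2-t1) + Real.sin (t3-t2) - Real.sin (t3-t1)) := by
    rw [det3_eq]
    simp only [nX_apply0, nX_apply1, nX_apply2, Real.sin_sub]
    ring
  have key := sin_triple ((t2-t1)/2) ((t3-t2)/2)
  rw [show 2*((t2-t1)/2) + 2*((t3-t2)/2) = t3-t1 by ring,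
    show 2*((t2-t1)/2) = t2-t1 by ring, show 2*((t3-t2)/2) = t3-t2 by ring,
    show (t2-t1)/2 + (t3-t2)/2 = (t3-t1)/2 by ring] at key
  rw [step1, key]
  linear_combination (Real.sin ((t2-t1)/2) * Real.sin ((t3-t2)/2) * Real.sin ((t3-t1)/2)
    * Real.sqrt 2 / 2) * h2

/-! ### Arc membership via angles -/

lemma mem_arc_of {σ1 σ2 θ : ℝ} (h12 : 0 < σ2 - σ1) (h12' : σ2 - σ1 < 2*π)
    (hθ : σ2 ≤ θ) (hθ' : θ ≤ σ1 + 2*π) : nX θ ∈ arc (nX σ1) (nX σ2) := by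
  have hπ := Real.pi_pos
  refine ⟨nX_FUN θ, ?_⟩
  rw [ldot_lcross, det3X]
  have s2pos : 0 < Real.sin ((σ2-σ1)/2) :=
    Real.sin_pos_of_pos_of_lt_pi (by linarith) (by linarith)
  have s1 : Real.sin ((σ1-θ)/2) ≤ 0 :=
    Real.sin_nonpos_of_nonpos_of_neg_pi_le (by linarith) (by linarith)
  have s3 : Real.sin ((σ2-θ)/2) ≤ 0 :=
    Real.sin_nonpos_of_nonpos_of_neg_pi_le (by linarith) (by linarith)
  have key : 0 ≤ Real.sin ((σ1-θ)/2) * Real.sin ((σ2-θ)/2) := by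
    nlinarith [mul_nonneg (neg_nonneg.mpr s1) (neg_nonneg.mpr s3)]
  nlinarith [mul_nonneg (mul_nonneg (Real.sqrt_nonneg 2) s2pos.le) key]

lemma arc_mem_dest {σ1 σ2 : ℝ} (h12 : 0 < σ2 - σ1) (h12' : σ2 - σ1 < 2*π)
    {x : Fin 3 → ℝ} (hx : x ∈ arc (nX σ1) (nX σ2)) :
    ∃ θ, σ2 ≤ θ ∧ θ ≤ σ1 + 2*π ∧ x = nX θ := by
  have hπ := Real.pi_pos
  obtain ⟨hF, hge⟩ := hx
  obtain ⟨θ₀, rfl⟩ := exists_angle hF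
  have h2π : (0:ℝ) < 2*π := by linarith
  set θ := toIcoMod h2π σ1 θ₀ with hθdef
  have hmem := toIcoMod_mem_Ico h2π σ1 θ₀
  have hXeq : nX θ = nX θ₀ := by
    rw [hθdef, toIcoMod, zsmul_eq_mul,
      show θ₀ - (toIcoDiv h2π σ1 θ₀ : ℝ) * (2*π) = θ₀ + (-(toIcoDiv h2π σ1 θ₀) : ℤ) * (2*π) by
        push_cast; ring, nX_add_int]
  rw [← hXeq, ldot_lcross, det3X] at hge
  rcases eq_or_lt_of_le hmem.1 with heq | hlt
  · refine ⟨σ1 + 2*π, by linarith, le_refl _, ?_⟩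
    rw [← hXeq, show θ = σ1 from by rw [hθdef]; exact heq.symm,
      show σ1 + 2*π = σ1 + (1:ℤ) * (2*π) by push_cast; ring, nX_add_int]
  · have hσ2 : σ2 ≤ θ := by
      by_contra hcon
      push_neg at hcon
      have s1 : Real.sin ((σ1-θ)/2) < 0 := by
        apply Real.sin_neg_of_neg_of_neg_pi_lt (by linarith)
        have := hmem.2; linarith [hmem.2]
      have s2pos : 0 < Real.sin ((σ2-σ1)/2) :=
        Real.sin_pos_of_pos_of_lt_pi (by linarith) (by linarith)
      have s3 : 0 < Real.sin ((σ2-θ)/2) :=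
        Real.sin_pos_of_pos_of_lt_pi (by linarith) (by linarith)
      have hs2 : (0:ℝ) < Real.sqrt 2 := sqrt2_pos
      nlinarith [mul_pos (mul_pos (mul_pos hs2 s2pos) s3) (neg_pos.mpr s1)]
    exact ⟨θ, hσ2, hmem.2.le, hXeq.symm⟩

/-! ### Null frames from pairs of null rays -/

lemma ldot_neg_of_ne {a b : Fin 3 → ℝ} (ha : FutureUnitNull a) (hb : FutureUnitNull b)
    (hne : a ≠ b) : ldot a b < 0 := by
  have ha2 := FUN_x2 ha
  have hb2 := FUN_x2 hb
  have h2 := sqrt2_sq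
  obtain ⟨ha0, -, ha3⟩ := ha
  obtain ⟨hb0, -, hb3⟩ := hb
  have key : ldot a b = -(((a 0 - b 0)^2 + (a 1 - b 1)^2)/2) := by
    simp only [ldot] at *
    nlinarith [ha2, hb2]
  have hpos : 0 < (a 0 - b 0)^2 + (a 1 - b 1)^2 := by
    rcases lt_or_eq_of_le (by positivity : (0:ℝ) ≤ (a 0 - b 0)^2 + (a 1 - b 1)^2) with h | h
    · exact h
    · exfalso
      apply hne
      have e0 : a 0 = b 0 := by nlinarith [sq_nonneg (a 0 - b 0), sq_nonneg (a 1 - b 1)]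
      have e1 : a 1 = b 1 := by nlinarith [sq_nonneg (a 0 - b 0), sq_nonneg (a 1 - b 1)]
      funext i; fin_cases i
      · show a 0 = b 0; exact e0
      · show a 1 = b 1; exact e1
      · show a 2 = b 2; rw [ha2, hb2]
  rw [key]; linarith

lemma frame_of_pair {a b : Fin 3 → ℝ} (ha : FutureUnitNull a) (hb : FutureUnitNull b)
    (hne : a ≠ b) : IsNullFramePair ((-(ldot a b))⁻¹ • lcross a b) a b := by
  have hq : ldot a b < 0 := ldot_neg_of_ne ha hb hne
  have hqne : ldot a b ≠ 0 := ne_of_lt hq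
  have hww : ldot (lcross a b) (lcross a b) = ldot a b ^ 2 := by
    rw [lcross_sq, ha.1, hb.1]; ring
  refine ⟨?_, ha, hb, ?_, ?_, ?_⟩
  · rw [ldot_smul_both, hww]
    field_simp
  · rw [ldot_smul_right, ldot_lcross, show det3 a a b = 0 by rw [det3_eq]; ring, mul_zero]
  · rw [ldot_smul_right, ldot_lcross, show det3 b a b = 0 by rw [det3_eq]; ring, mul_zero]
  · rw [gt_iff_lt, ← ldot_lcross, ldot_smul_left, hww]
    have hq2 : (0:ℝ) < ldot a b ^ 2 := by rw [sq]; exact mul_pos_of_neg_of_neg hq hq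
    exact mul_pos (inv_pos.mpr (by linarith)) hq2

lemma frame_unique {u a b : Fin 3 → ℝ} (hf : IsNullFramePair u a b) :
    u = (-(ldot a b))⁻¹ • lcross a b := by
  obtain ⟨hu1, hfa, hfb, hau, hbu, hdet⟩ := hf
  have hne : a ≠ b := by
    intro hcon
    rw [hcon, show det3 u b b = 0 by rw [det3_eq]; ring] at hdet
    exact lt_irrefl 0 hdet
  have hq : ldot a b < 0 := ldot_neg_of_ne hfa hfb hne
  have hqne : ldot a b ≠ 0 := ne_of_lt hq
  have hww : ldot (lcross a b) (lcross a b) = ldot a b ^ 2 := by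
    rw [lcross_sq, hfa.1, hfb.1]; ring
  set w := lcross a b with hw
  have hw0 : w 0 = a 1 * b 2 - a 2 * b 1 := rfl
  have hw1 : w 1 = a 2 * b 0 - a 0 * b 2 := rfl
  have hw2 : w 2 = -(a 0 * b 1 - a 1 * b 0) := rfl
  set wE : ℝ := w 0 ^ 2 + w 1 ^ 2 + w 2 ^ 2 with hwE
  set uw : ℝ := u 0 * w 0 + u 1 * w 1 + u 2 * w 2 with huw
  simp only [ldot] at hau hbu
  have key0 : wE * u 0 = uw * w 0 := by
    rw [hwE, huw, hw0, hw1, hw2]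
    linear_combination (-((a 2*b 0 - a 0*b 2)*b 2) - (-(a 0*b 1 - a 1*b 0))*b 1) * hau
      + ((a 2*b 0 - a 0*b 2)*a 2 + (-(a 0*b 1 - a 1*b 0))*a 1) * hbu
  have key1 : wE * u 1 = uw * w 1 := by
    rw [hwE, huw, hw0, hw1, hw2]
    linear_combination ((-(a 0*b 1 - a 1*b 0))*b 0 + (a 1*b 2 - a 2*b 1)*b 2) * hau
      + (-((-(a 0*b 1 - a 1*b 0))*a 0 + (a 1*b 2 - a 2*b 1)*a 2)) * hbu
  have key2 : wE * u 2 = uw * w 2 := by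
    rw [hwE, huw, hw0, hw1, hw2]
    linear_combination ((a 1*b 2 - a 2*b 1)*b 1 - (a 2*b 0 - a 0*b 2)*b 0) * hau
      + (-((a 1*b 2 - a 2*b 1)*a 1 - (a 2*b 0 - a 0*b 2)*a 0)) * hbu
  have hwEpos : 0 < wE := by
    have h' : ldot w w = ldot a b ^ 2 := hww
    simp only [ldot] at h'
    have hqu : a 0 * b 0 + a 1 * b 1 - a 2 * b 2 < 0 := hq
    rw [hwE]
    nlinarith [h', sq_nonneg (w 2), mul_pos_of_neg_of_neg hqu hqu]
  have huform : u = (uw / wE) • w := by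
    funext i
    have hthis : wE * u i = uw * w i := by fin_cases i <;> assumption
    have hne' : wE ≠ 0 := ne_of_gt hwEpos
    have hsm : ((uw / wE) • w) i = uw / wE * w i := rfl
    rw [hsm, div_mul_eq_mul_div, eq_div_iff hne']
    linear_combination hthis
  set t₀ := uw / wE with ht₀
  have hld : ldot u u = t₀^2 * ldot w w := by rw [huform, ldot_smul_both]
  have ht2 : t₀^2 * ldot a b ^2 = 1 := by rw [← hww, ← hld, hu1]
  have hdw : ldot u w = t₀ * ldot a b ^ 2 := by
    rw [huform, ldot_smul_left, hww]
  have hdet' : 0 < t₀ * ldot a b ^ 2 := by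
    rw [← hdw, hw, ldot_lcross]; exact hdet
  have hq2pos : (0:ℝ) < ldot a b ^ 2 := by rw [sq]; exact mul_pos_of_neg_of_neg hq hq
  have ht₀pos : 0 < t₀ := by
    rcases mul_pos_iff.mp hdet' with ⟨h1, _⟩ | ⟨_, h2⟩
    · exact h1
    · linarith
  have hspos : 0 < (-(ldot a b))⁻¹ := inv_pos.mpr (by linarith)
  have hinv : (-(ldot a b))⁻¹ * ldot a b = -1 := by
    have h' := inv_mul_cancel₀ (show -ldot a b ≠ 0 by linarith)
    linear_combination -h'
  have hs2 : ((-(ldot a b))⁻¹)^2 * ldot a b ^ 2 = 1 := by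
    rw [← mul_pow, hinv]; norm_num
  have hsq : t₀^2 = ((-(ldot a b))⁻¹)^2 :=
    mul_right_cancel₀ (ne_of_gt hq2pos) (ht2.trans hs2.symm)
  have hfac : (t₀ - (-(ldot a b))⁻¹) * (t₀ + (-(ldot a b))⁻¹) = 0 := by linear_combination hsq
  rcases mul_eq_zero.mp hfac with h | h
  · rw [huform, show t₀ = (-(ldot a b))⁻¹ from by linarith]
  · linarith

/-! ### Reduction of the cone condition to determinants -/

lemma arc_self_left {a : Fin 3 → ℝ} (b : Fin 3 → ℝ) (ha : FutureUnitNull a) : a ∈ arc a b := by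
  refine ⟨ha, ?_⟩
  rw [ldot_lcross, show det3 a a b = 0 by rw [det3_eq]; ring]

lemma arc_self_right {b : Fin 3 → ℝ} (a : Fin 3 → ℝ) (hb : FutureUnitNull b) : b ∈ arc a b := by
  refine ⟨hb, ?_⟩
  rw [ldot_lcross, show det3 b a b = 0 by rw [det3_eq]; ring]

lemma pos_det_of_mem {Um Up : Set (Fin 3 → ℝ)} (hdisj : Disjoint Um Up)
    (hUm : ∀ x ∈ Um, FutureUnitNull x) (hUp : ∀ x ∈ Up, FutureUnitNull x)
    {v : Fin 3 → ℝ} (hv : v ∈ coneC Um Up)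
    {a b : Fin 3 → ℝ} (ha : a ∈ Um) (hb : b ∈ Up) : 0 < det3 v a b := by
  have hne : a ≠ b := by
    intro h
    exact Set.disjoint_left.mp hdisj ha (h ▸ hb)
  have hfa := hUm a ha
  have hfb := hUp b hb
  have hq : ldot a b < 0 := ldot_neg_of_ne hfa hfb hne
  have h := hv _ a b (frame_of_pair hfa hfb hne) ha hb
  rw [ldot_smul_right, ldot_lcross] at h
  rcases mul_pos_iff.mp h with ⟨_, h2⟩ | ⟨h1, _⟩
  · exact h2
  · exfalso
    have : 0 < (-(ldot a b))⁻¹ := inv_pos.mpr (by linarith)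
    linarith

lemma mem_coneC_of_pos_det {Um Up : Set (Fin 3 → ℝ)}
    {v : Fin 3 → ℝ} (hpos : ∀ a ∈ Um, ∀ b ∈ Up, 0 < det3 v a b) : v ∈ coneC Um Up := by
  intro u a b hfr ha hb
  have hne : a ≠ b := by
    intro hcon
    have hdet := hfr.2.2.2.2.2
    rw [hcon, show det3 u b b = 0 by rw [det3_eq]; ring] at hdet
    exact lt_irrefl 0 hdet
  have hq : ldot a b < 0 := ldot_neg_of_ne hfr.2.1 hfr.2.2.1 hne
  rw [frame_unique hfr, ldot_smul_right, ldot_lcross]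
  exact mul_pos (inv_pos.mpr (by linarith)) (hpos a ha b hb)

/-! ### Compactness of arcs -/

lemma FUN_coord_bound {a : Fin 3 → ℝ} (h : FutureUnitNull a) : ∀ i, |a i| ≤ 1 := by
  have h3 := h.2.2
  have h0 : |a 0| ≤ 1 := by
    rw [abs_le]
    constructor <;> nlinarith [sq_nonneg (a 0 + 1), sq_nonneg (a 0 - 1), sq_nonneg (a 1),
      sq_nonneg (a 2)]
  have h1 : |a 1| ≤ 1 := by
    rw [abs_le]
    constructor <;> nlinarith [sq_nonneg (a 1 + 1), sq_nonneg (a 1 - 1), sq_nonneg (a 0),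
      sq_nonneg (a 2)]
  have h2 : |a 2| ≤ 1 := by
    rw [abs_le]
    constructor <;> nlinarith [sq_nonneg (a 2 + 1), sq_nonneg (a 2 - 1), sq_nonneg (a 0),
      sq_nonneg (a 1)]
  intro i
  fin_cases i
  · exact h0
  · exact h1
  · exact h2

lemma one_le_sqrt2 : (1:ℝ) ≤ Real.sqrt 2 := by
  nlinarith [sqrt2_sq, Real.sqrt_nonneg 2]

lemma arc_isCompact (a b : Fin 3 → ℝ) : IsCompact (arc a b) := by
  apply Metric.isCompact_of_isClosed_isBounded
  · have heq : arc a b = {x : Fin 3 → ℝ | ldot x x = 0} ∩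
        ({x : Fin 3 → ℝ | x 0 ^ 2 + x 1 ^ 2 + x 2 ^ 2 = 1} ∩
        ({x : Fin 3 → ℝ | (1:ℝ)/2 ≤ x 2} ∩ {x : Fin 3 → ℝ | 0 ≤ ldot x (lcross a b)})) := by
      ext x
      constructor
      · rintro ⟨⟨hx0, hx1, hx2⟩, hx3⟩
        refine ⟨hx0, hx2, ?_, hx3⟩
        have hx2' := FUN_x2 ⟨hx0, hx1, hx2⟩
        show (1:ℝ)/2 ≤ x 2
        rw [hx2']
        linarith [one_le_sqrt2]
      · rintro ⟨hx0, hx1, hx2, hx3⟩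
        have hx2' : (1:ℝ)/2 ≤ x 2 := hx2
        exact ⟨⟨hx0, by linarith, hx1⟩, hx3⟩
    have c1 : Continuous fun x : Fin 3 → ℝ => ldot x x := by unfold ldot; fun_prop
    have c2 : Continuous fun x : Fin 3 → ℝ => x 0 ^ 2 + x 1 ^ 2 + x 2 ^ 2 := by fun_prop
    have c3 : Continuous fun x : Fin 3 → ℝ => x 2 := continuous_apply 2
    have c4 : Continuous fun x : Fin 3 → ℝ => ldot x (lcross a b) := by unfold ldot; fun_prop
    rw [heq]
    exact (isClosed_eq c1 continuous_const).inter ((isClosed_eq c2 continuous_const).inter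
      ((isClosed_le continuous_const c3).inter (isClosed_le continuous_const c4)))
  · apply Bornology.IsBounded.subset (Metric.isBounded_closedBall (x := (0 : Fin 3 → ℝ)) (r := 1))
    intro x hx
    rw [mem_closedBall_zero_iff, pi_norm_le_iff_of_nonneg (by norm_num : (0:ℝ) ≤ 1)]
    intro i
    rw [Real.norm_eq_abs]
    exact FUN_coord_bound hx.1 i

lemma det3_bound {a b : Fin 3 → ℝ} (z : Fin 3 → ℝ)
    (ha : ∀ i, |a i| ≤ 1) (hb : ∀ i, |b i| ≤ 1) : |det3 z a b| ≤ 6 * ‖z‖ := by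
  have hz : ∀ i, |z i| ≤ ‖z‖ := by
    intro i
    have := norm_le_pi_norm z i
    rwa [Real.norm_eq_abs] at this
  have habs : ∀ (p q r s : ℝ), |p| ≤ 1 → |q| ≤ 1 → |r| ≤ 1 → |s| ≤ 1 → |p*q - r*s| ≤ 2 := by
    intro p q r s hp hq hr hs
    have h1 : |p*q| ≤ 1 := by
      rw [abs_mul]; exact mul_le_one₀ hp (abs_nonneg _) hq
    have h2 : |r*s| ≤ 1 := by
      rw [abs_mul]; exact mul_le_one₀ hr (abs_nonneg _) hs
    calc |p*q - r*s| ≤ |p*q| + |r*s| := abs_sub _ _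
      _ ≤ 2 := by linarith
  have hA0 : |a 1 * b 2 - a 2 * b 1| ≤ 2 := habs _ _ _ _ (ha 1) (hb 2) (ha 2) (hb 1)
  have hA1 : |a 2 * b 0 - a 0 * b 2| ≤ 2 := habs _ _ _ _ (ha 2) (hb 0) (ha 0) (hb 2)
  have hA2 : |a 0 * b 1 - a 1 * b 0| ≤ 2 := habs _ _ _ _ (ha 0) (hb 1) (ha 1) (hb 0)
  have p0 : |z 0 * (a 1 * b 2 - a 2 * b 1)| ≤ ‖z‖ * 2 := by
    rw [abs_mul]; exact mul_le_mul (hz 0) hA0 (abs_nonneg _) (norm_nonneg _)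
  have p1 : |z 1 * (a 2 * b 0 - a 0 * b 2)| ≤ ‖z‖ * 2 := by
    rw [abs_mul]; exact mul_le_mul (hz 1) hA1 (abs_nonneg _) (norm_nonneg _)
  have p2 : |z 2 * (a 0 * b 1 - a 1 * b 0)| ≤ ‖z‖ * 2 := by
    rw [abs_mul]; exact mul_le_mul (hz 2) hA2 (abs_nonneg _) (norm_nonneg _)
  have hsplit : det3 z a b = z 0 * (a 1 * b 2 - a 2 * b 1) + z 1 * (a 2 * b 0 - a 0 * b 2)
      + z 2 * (a 0 * b 1 - a 1 * b 0) := by rw [det3_eq]; ring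
  rw [hsplit]
  calc |z 0 * (a 1 * b 2 - a 2 * b 1) + z 1 * (a 2 * b 0 - a 0 * b 2)
      + z 2 * (a 0 * b 1 - a 1 * b 0)|
      ≤ |z 0 * (a 1 * b 2 - a 2 * b 1) + z 1 * (a 2 * b 0 - a 0 * b 2)|
        + |z 2 * (a 0 * b 1 - a 1 * b 0)| := abs_add_le _ _
    _ ≤ |z 0 * (a 1 * b 2 - a 2 * b 1)| + |z 1 * (a 2 * b 0 - a 0 * b 2)|
        + |z 2 * (a 0 * b 1 - a 1 * b 0)| := by
          linarith [abs_add_le (z 0 * (a 1 * b 2 - a 2 * b 1)) (z 1 * (a 2 * b 0 - a 0 * b 2))]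
    _ ≤ 6 * ‖z‖ := by linarith

/-! ### Openness -/

lemma coneC_isOpen {am bm ap bp : Fin 3 → ℝ}
    (ham : FutureUnitNull am) (hbp : FutureUnitNull bp)
    (hdisj : Disjoint (arc am bm) (arc ap bp)) :
    IsOpen (coneC (arc am bm) (arc ap bp)) := by
  rw [Metric.isOpen_iff]
  intro v hv
  have hKm : IsCompact ((arc am bm) ×ˢ (arc ap bp)) :=
    (arc_isCompact am bm).prod (arc_isCompact ap bp)
  have hne : ((arc am bm) ×ˢ (arc ap bp)).Nonempty :=
    ⟨(am, bp), arc_self_left bm ham, arc_self_right ap hbp⟩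
  have hcont : ContinuousOn (fun p : (Fin 3 → ℝ) × (Fin 3 → ℝ) => det3 v p.1 p.2)
      ((arc am bm) ×ˢ (arc ap bp)) := by
    apply Continuous.continuousOn
    simp only [det3_eq]
    fun_prop
  obtain ⟨p₀, hp₀, hmin⟩ := hKm.exists_isMinOn hne hcont
  have hm : 0 < det3 v p₀.1 p₀.2 :=
    pos_det_of_mem hdisj (fun x hx => hx.1) (fun x hx => hx.1) hv
      (Set.mem_prod.mp hp₀).1 (Set.mem_prod.mp hp₀).2
  set m := det3 v p₀.1 p₀.2 with hmdef
  refine ⟨m/7, by positivity, ?_⟩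
  intro v' hv'
  rw [Metric.mem_ball, dist_eq_norm] at hv'
  apply mem_coneC_of_pos_det
  intro a ha b hb
  have h1 : m ≤ det3 v a b := isMinOn_iff.mp hmin (a, b) (Set.mem_prod.mpr ⟨ha, hb⟩)
  have h2 : |det3 (v' - v) a b| ≤ 6 * ‖v' - v‖ :=
    det3_bound _ (FUN_coord_bound ha.1) (FUN_coord_bound hb.1)
  have h3 : det3 v' a b = det3 v a b + det3 (v' - v) a b := by
    have hvv : v + (v' - v) = v' := by abel
    rw [← det3_add_left, hvv]
  have h4 := (abs_le.mp h2).1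
  rw [h3]
  linarith

/-! ### Non-emptiness -/

lemma coneC_nonempty {am bm ap bp : Fin 3 → ℝ}
    (ham : FutureUnitNull am) (hbm : FutureUnitNull bm)
    (hap : FutureUnitNull ap) (hbp : FutureUnitNull bp)
    (hntm : am ≠ bm) (hntp : ap ≠ bp)
    (hdisj : Disjoint (arc am bm) (arc ap bp)) :
    (coneC (arc am bm) (arc ap bp)).Nonempty := by
  have hπ := Real.pi_pos
  have h2π : (0:ℝ) < 2*π := by linarith
  obtain ⟨α, hamX⟩ := exists_angle ham
  obtain ⟨β₀, hbmX⟩ := exists_angle hbm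
  obtain ⟨γ₀, hapX⟩ := exists_angle hap
  obtain ⟨δ₀, hbpX⟩ := exists_angle hbp
  -- normalize bm's angle into [α, α + 2π)
  set β := toIcoMod h2π α β₀ with hβdef
  have hβmem := toIcoMod_mem_Ico h2π α β₀
  have hbmX' : bm = nX β := by
    rw [hbmX, hβdef, toIcoMod, zsmul_eq_mul,
      show β₀ - (toIcoDiv h2π α β₀ : ℝ) * (2*π) = β₀ + (-(toIcoDiv h2π α β₀) : ℤ) * (2*π) by
        push_cast; ring, nX_add_int]
  have hαβ : α < β := by
    rcases eq_or_lt_of_le hβmem.1 with h | h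
    · exfalso; exact hntm (by rw [hamX, hbmX', hβdef, ← h])
    · exact h
  -- normalize bp's angle into (γ₀, γ₀ + 2π)
  set δ₁ := toIcoMod h2π γ₀ δ₀ with hδ₁def
  have hδ₁mem := toIcoMod_mem_Ico h2π γ₀ δ₀
  have hbpX' : bp = nX δ₁ := by
    rw [hbpX, hδ₁def, toIcoMod, zsmul_eq_mul,
      show δ₀ - (toIcoDiv h2π γ₀ δ₀ : ℝ) * (2*π) = δ₀ + (-(toIcoDiv h2π γ₀ δ₀) : ℤ) * (2*π) by
        push_cast; ring, nX_add_int]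
  have hγδ₁ : γ₀ < δ₁ := by
    rcases eq_or_lt_of_le hδ₁mem.1 with h | h
    · exfalso; exact hntp (by rw [hapX, hbpX', hδ₁def, ← h])
    · exact h
  -- shift the pair (γ₀, δ₁) by a multiple of 2π so that δ lands in [β, β + 2π)
  set k := toIcoDiv h2π β δ₁ with hkdef
  set δ := toIcoMod h2π β δ₁ with hδdef
  set γ := γ₀ - k * (2*π) with hγdef
  have hδeq : δ = δ₁ - k * (2*π) := by
    rw [hδdef, toIcoMod, hkdef, zsmul_eq_mul]
  have hδmem := toIcoMod_mem_Ico h2π β δ₁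
  have hbpX'' : bp = nX δ := by
    rw [hbpX', hδeq, ← nX_sub_int δ₁ k]
  have hapX'' : ap = nX γ := by
    rw [hapX, hγdef, ← nX_sub_int γ₀ k]
  have hγδ : 0 < δ - γ := by rw [hδeq, hγdef]; linarith
  have hγδ' : δ - γ < 2*π := by rw [hδeq, hγdef]; linarith [hδ₁mem.2]
  have hβα : 0 < β - α := by linarith
  have hβα' : β - α < 2*π := by linarith [hβmem.2]
  -- bp is not in Um, hence δ > α + 2π
  have hbp_notin : bp ∉ arc am bm := by
    intro hcon
    exact Set.disjoint_left.mp hdisj hcon (arc_self_right ap hbp)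
  have hδgt : α + 2*π < δ := by
    by_contra hcon
    push_neg at hcon
    apply hbp_notin
    rw [hamX, hbmX', hbpX'']
    exact mem_arc_of hβα hβα' hδmem.1 hcon
  -- bm is not in Up, hence γ < β
  have hbm_notin : bm ∉ arc ap bp := by
    intro hcon
    exact Set.disjoint_left.mp hdisj (arc_self_right am hbm) hcon
  have hγβ : γ < β := by
    by_contra hcon
    push_neg at hcon
    apply hbm_notin
    rw [hapX'', hbpX'',
      show bm = nX (β + 2*π) from by
        rw [hbmX', show β + 2*π = β + (1:ℤ) * (2*π) by push_cast; ring, nX_add_int]]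
    exact mem_arc_of hγδ hγδ' (by linarith [hδmem.2]) (by linarith)
  have hαγ : α < γ := by linarith
  -- the witness
  refine ⟨nX ((γ + β)/2), mem_coneC_of_pos_det ?_⟩
  intro a ha b hb
  rw [hamX, hbmX'] at ha
  rw [hapX'', hbpX''] at hb
  obtain ⟨θa, hθa1, hθa2, rfl⟩ := arc_mem_dest hβα hβα' ha
  obtain ⟨θb, hθb1, hθb2, rfl⟩ := arc_mem_dest hγδ hγδ' hb
  rw [det3X]
  have s1 : 0 < Real.sin ((θa - (γ + β)/2)/2) :=
    Real.sin_pos_of_pos_of_lt_pi (by linarith) (by linarith)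
  have s2 : 0 < Real.sin ((θb - θa)/2) :=
    Real.sin_pos_of_pos_of_lt_pi (by linarith) (by linarith)
  have s3 : 0 < Real.sin ((θb - (γ + β)/2)/2) :=
    Real.sin_pos_of_pos_of_lt_pi (by linarith) (by linarith)
  exact mul_pos sqrt2_pos (mul_pos (mul_pos s1 s2) s3)

/-- Every v ∈ C(U⁻, U⁺) pairs positively with every unit-spacelike u whose null frame
has x⁻(u) ∈ U⁻ and x⁺(u) ∈ U⁺; moreover C(U⁻, U⁺) is a non-empty open convex cone. -/
theorem stmt_14 (am bm ap bp : Fin 3 → ℝ)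
    (ham : FutureUnitNull am) (hbm : FutureUnitNull bm)
    (hap : FutureUnitNull ap) (hbp : FutureUnitNull bp)
    (hntm : am ≠ bm) (hntp : ap ≠ bp)
    (hdisj : Disjoint (arc am bm) (arc ap bp)) :
    (∀ v ∈ coneC (arc am bm) (arc ap bp), ∀ u xm xp : Fin 3 → ℝ,
        IsNullFramePair u xm xp → xm ∈ arc am bm → xp ∈ arc ap bp → 0 < ldot v u) ∧
    (coneC (arc am bm) (arc ap bp)).Nonempty ∧
    IsOpen (coneC (arc am bm) (arc ap bp)) ∧
    Convex ℝ (coneC (arc am bm) (arc ap bp)) ∧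
    (∀ v ∈ coneC (arc am bm) (arc ap bp), ∀ t : ℝ, 0 < t →
        t • v ∈ coneC (arc am bm) (arc ap bp)) := by
  refine ⟨fun v hv => hv, ?_, ?_, ?_, ?_⟩
  · exact coneC_nonempty ham hbm hap hbp hntm hntp hdisj
  · exact coneC_isOpen ham hbp hdisj
  · intro x hx y hy s t hs ht hst
    intro u a b hfr ha hb
    have hx' := hx u a b hfr ha hb
    have hy' := hy u a b hfr ha hb
    have hsum : ldot (s • x + t • y) u = s * ldot x u + t * ldot y u := by
      simp [ldot]; ring
    rw [hsum]
    rcases eq_or_lt_of_le hs with h | h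
    · have hteq : t = 1 := by linarith
      rw [← h, hteq]; linarith
    · nlinarith [mul_pos h hx', mul_nonneg ht hy'.le]
  · intro v hv t ht
    intro u a b hfr ha hb
    have := hv u a b hfr ha hb
    rw [ldot_smul_left]
    exact mul_pos ht this
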